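/- In U(O), for all i,j,k,m ∈ ℕ+: [x_j^{Γ,+}, p_i^Γ(k,m)] = −2 D_i^{Γ,+}(j,k,m), where D_i^{Γ,+}(j,k,m) := Σ_{n=0}^i Σ_{v=0}^i (−1)^{n+v} C(i,n) C(i,v) x^{Γ,+}_{j+(i−2n)k+(i−2v)m}. -/

import Mathlib

open Finset

noncomputable section

/- Setting: `A` plays the role of the universal enveloping algebra `U(O)` of the
Onsager algebra.  `X m = x_m^{Γ,+}`, `Y m = x_m^{Γ,-}`, `H m = h_m^Γ` (indexed by `ℤ`
via the conventions `x_{-m}^{Γ,±} = -x_m^{Γ,±}`, `x_0^{Γ,±} = 0`, `h_{-m}^Γ = h_m^Γ`),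
and the Lie brackets of `O` are imposed as commutator relations. -/
variable {A : Type*} [Ring A] [Algebra ℂ A]

/-- `Λ^Γ_{j,l,1} = -(h^Γ_{j+l} - h^Γ_{j-l})`. -/
def Lam1 (H : ℤ → A) (j l : ℤ) : A := -(H (j + l) - H (j - l))

/-- `D^{Γ,+}_{u,1}(j,l)`. -/
def Dp (X H : ℤ → A) (j l : ℤ) : ℕ → A
  | 0 => X j
  | u + 1 => ((1 : ℂ) / 2) • ⁅Dp X H j l u, Lam1 H j l⁆

/-- `D^{Γ,-}_{u,1}(j,l)`. -/
def Dm (Y H : ℤ → A) (j l : ℤ) : ℕ → A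
  | 0 => Y l
  | u + 1 => (-((1 : ℂ) / 2)) • ⁅Dm Y H j l u, Lam1 H j l⁆

/-- `p^Γ_s(j,l) = [x_j^{Γ,+}, D^{Γ,-}_{s-1,1}(j,l)]`. -/
def pG (X Y H : ℤ → A) (j l : ℤ) (s : ℕ) : A := ⁅X j, Dm Y H j l (s - 1)⁆

/-- `Λ^Γ_{j,l,n}`, via the recursion `n Λ_n = -∑_{i=1}^n p_i Λ_{n-i}` equivalent to the
exponential generating series definition. -/
def Lam (X Y H : ℤ → A) (j l : ℤ) : ℕ → A
  | 0 => 1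
  | n + 1 =>
      (-(((n : ℂ) + 1)⁻¹)) •
        ∑ i ∈ Finset.range (n + 1), pG X Y H j l (i + 1) * Lam X Y H j l (n - i)
  decreasing_by omega

/-- `D^{Γ,+}_{u,v}(j,l)`. -/
def DvP (X H : ℤ → A) (j l : ℤ) : ℕ → ℕ → A
  | u, 0 => if u = 0 then 1 else 0
  | u, v + 1 =>
      (((v : ℂ) + 1)⁻¹) • ∑ i ∈ Finset.range (u + 1), Dp X H j l i * DvP X H j l (u - i) v

/-- `D^{Γ,-}_{u,v}(j,l)`. -/
def DvM (Y H : ℤ → A) (j l : ℤ) : ℕ → ℕ → A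
  | u, 0 => if u = 0 then 1 else 0
  | u, v + 1 =>
      (((v : ℂ) + 1)⁻¹) • ∑ i ∈ Finset.range (u + 1), Dm Y H j l i * DvM Y H j l (u - i) v


/-! ### Auxiliary machinery -/

set_option linter.unusedSectionVars false

section SsumLemmas

variable {M : Type*} [AddCommGroup M]

/-- Signed binomial transform. -/
def Ssum (u : ℕ) (g : ℕ → M) : M :=
  ∑ a ∈ Finset.range (u + 1), ((-1 : ℤ) ^ a * (u.choose a : ℤ)) • g a

lemma Ssum_congr {u : ℕ} {f g : ℕ → M} (h : ∀ a, a ≤ u → f a = g a) :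
    Ssum u f = Ssum u g :=
  Finset.sum_congr rfl fun a ha => by
    rw [h a (Nat.lt_succ_iff.mp (Finset.mem_range.mp ha))]

lemma Ssum_add (u : ℕ) (f g : ℕ → M) :
    Ssum u (fun a => f a + g a) = Ssum u f + Ssum u g := by
  simp [Ssum, smul_add, Finset.sum_add_distrib]

lemma Ssum_sub (u : ℕ) (f g : ℕ → M) :
    Ssum u (fun a => f a - g a) = Ssum u f - Ssum u g := by
  simp [Ssum, smul_sub, Finset.sum_sub_distrib]

lemma Ssum_zsmul (u : ℕ) (c : ℤ) (g : ℕ → M) :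
    Ssum u (fun a => c • g a) = c • Ssum u g := by
  simp [Ssum, Finset.smul_sum, smul_comm c]

lemma Ssum_succ (u : ℕ) (g : ℕ → M) :
    Ssum (u + 1) g = Ssum u (fun a => g a - g (a + 1)) := by
  rw [Ssum_sub]
  unfold Ssum
  rw [Finset.sum_range_succ' (fun a => ((-1 : ℤ) ^ a * ((u + 1).choose a : ℤ)) • g a)]
  have h1 : ∀ a : ℕ, ((-1 : ℤ) ^ (a + 1) * ((u + 1).choose (a + 1) : ℤ)) • g (a + 1)
      = ((-1 : ℤ) ^ (a + 1) * (u.choose (a + 1) : ℤ)) • g (a + 1)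
        - ((-1 : ℤ) ^ a * (u.choose a : ℤ)) • g (a + 1) := by
    intro a
    rw [← sub_smul, Nat.choose_succ_succ]
    congr 1
    push_cast
    ring
  rw [Finset.sum_congr rfl fun a _ => h1 a, Finset.sum_sub_distrib]
  have h2 : ∑ a ∈ Finset.range (u + 1),
        ((-1 : ℤ) ^ (a + 1) * (u.choose (a + 1) : ℤ)) • g (a + 1)
      = ∑ a ∈ Finset.range (u + 1), ((-1 : ℤ) ^ a * (u.choose a : ℤ)) • g a
        - ((-1 : ℤ) ^ 0 * (u.choose 0 : ℤ)) • g 0 := by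
    have := Finset.sum_range_succ'
      (fun a => ((-1 : ℤ) ^ a * (u.choose a : ℤ)) • g a) (u + 1)
    rw [Finset.sum_range_succ (fun a => ((-1 : ℤ) ^ a * (u.choose a : ℤ)) • g a) (u + 1)]
      at this
    simp only [Nat.choose_succ_self, Nat.cast_zero, mul_zero, zero_smul, add_zero] at this
    rw [eq_sub_iff_add_eq]
    exact this.symm
  rw [h2]
  simp
  abel

lemma Ssum_reflect (u : ℕ) (g : ℕ → M) :
    Ssum u g = (-1 : ℤ) ^ u • Ssum u (fun a => g (u - a)) := by
  unfold Ssum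
  rw [Finset.smul_sum]
  rw [← Finset.sum_range_reflect
    (fun a => ((-1 : ℤ) ^ a * (u.choose a : ℤ)) • g a) (u + 1)]
  refine Finset.sum_congr rfl fun a ha => ?_
  have ha' : a ≤ u := Nat.lt_succ_iff.mp (Finset.mem_range.mp ha)
  have hidx : u + 1 - 1 - a = u - a := by omega
  rw [hidx, smul_smul]
  congr 1
  rw [Nat.choose_symm ha']
  have key : (-1 : ℤ) ^ (u - a) * (-1) ^ a = (-1) ^ u := by
    rw [← pow_add, show u - a + a = u by omega]
  have h3 : (-1 : ℤ) ^ a * (-1) ^ a = 1 := by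
    rw [← pow_add, ← two_mul, pow_mul]
    norm_num
  have h2 : (-1 : ℤ) ^ (u - a) = (-1) ^ u * (-1) ^ a := by
    rw [← key, mul_assoc, h3, mul_one]
  rw [h2, mul_assoc]

lemma inner_core (u : ℕ) (φ : ℤ → M) :
    Ssum u (fun b => φ ((u : ℤ) + 1 - 2 * b))
      + (-1 : ℤ) ^ (u + 1) • Ssum u (fun b => φ (2 * b - ((u : ℤ) + 1)))
    = Ssum (u + 1) fun v => φ ((u : ℤ) + 1 - 2 * v) := by
  have refl2 : Ssum u (fun b => φ (2 * (b : ℤ) - ((u : ℤ) + 1)))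
      = (-1 : ℤ) ^ u • Ssum u (fun b => φ ((u : ℤ) + 1 - 2 * ((b : ℤ) + 1))) := by
    rw [Ssum_reflect u (fun b => φ (2 * (b : ℤ) - ((u : ℤ) + 1)))]
    congr 1
    refine Ssum_congr fun b hb => ?_
    exact congrArg φ (by push_cast [Nat.cast_sub hb]; ring)
  rw [refl2, smul_smul]
  have hsgn : ((-1 : ℤ) ^ (u + 1) * (-1) ^ u) = -1 := by
    rw [← pow_add, show u + 1 + u = 2 * u + 1 by omega, pow_succ, pow_mul]
    norm_num
  rw [hsgn, neg_one_smul, ← sub_eq_add_neg, ← Ssum_sub, Ssum_succ]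
  exact Ssum_congr fun a _ =>
    congrArg₂ Sub.sub rfl (congrArg φ (by push_cast; ring))

lemma core (u : ℕ) (F : ℤ → ℤ → M) :
    Ssum u (fun a => Ssum u (fun b =>
      F (((u : ℤ) + 1) - 2 * a) (((u : ℤ) + 1) - 2 * b)
        + F (2 * a - ((u : ℤ) + 1)) (2 * b - ((u : ℤ) + 1))
        - F (2 + 2 * a - ((u : ℤ) + 1)) (2 * b - ((u : ℤ) + 1))
        - F (((u : ℤ) + 1) - 2 - 2 * a) (((u : ℤ) + 1) - 2 * b)))
    = Ssum (u + 1) fun n => Ssum (u + 1) fun v =>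
        F (((u : ℤ) + 1) - 2 * n) (((u : ℤ) + 1) - 2 * v) := by
  set I : ℤ := (u : ℤ) + 1 with hI
  have step1 : ∀ a : ℕ, a ≤ u →
      (Ssum u fun b => F (I - 2 * a) (I - 2 * b) + F (2 * a - I) (2 * b - I)
          - F (2 + 2 * a - I) (2 * b - I) - F (I - 2 - 2 * a) (I - 2 * b))
      = ((Ssum u fun b => F (I - 2 * a) (I - 2 * b))
          + Ssum u fun b => F (2 * a - I) (2 * b - I))
        - ((Ssum u fun b => F (I - 2 * ((a : ℤ) + 1)) (I - 2 * b))
          + Ssum u fun b => F (2 * ((a : ℤ) + 1) - I) (2 * b - I)) := by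
    intro a _
    rw [← Ssum_add, ← Ssum_add, ← Ssum_sub]
    refine Ssum_congr fun b _ => ?_
    rw [show (2 : ℤ) + 2 * a - I = 2 * ((a : ℤ) + 1) - I by ring,
      show I - 2 - 2 * (a : ℤ) = I - 2 * ((a : ℤ) + 1) by ring]
    abel
  rw [Ssum_congr step1]
  have step2 : (Ssum u fun a =>
      ((Ssum u fun b => F (I - 2 * a) (I - 2 * b))
          + Ssum u fun b => F (2 * a - I) (2 * b - I))
        - ((Ssum u fun b => F (I - 2 * ((a : ℤ) + 1)) (I - 2 * b))
          + Ssum u fun b => F (2 * ((a : ℤ) + 1) - I) (2 * b - I)))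
      = Ssum (u + 1) fun a =>
        ((Ssum u fun b => F (I - 2 * a) (I - 2 * b))
          + Ssum u fun b => F (2 * a - I) (2 * b - I)) := by
    rw [Ssum_succ u (fun a =>
      ((Ssum u fun b => F (I - 2 * a) (I - 2 * b))
        + Ssum u fun b => F (2 * a - I) (2 * b - I)))]
    refine Ssum_congr fun a _ => ?_
    congr 3
  rw [step2, Ssum_add]
  have step3 : (Ssum (u + 1) fun a => Ssum u fun b => F (2 * a - I) (2 * b - I))
      = Ssum (u + 1) fun a =>
          (-1 : ℤ) ^ (u + 1) • Ssum u fun b => F (I - 2 * a) (2 * b - I) := by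
    rw [Ssum_reflect (u + 1) (fun a => Ssum u fun b => F (2 * (a : ℤ) - I) (2 * b - I)),
      Ssum_zsmul]
    congr 1
    refine Ssum_congr fun a ha => ?_
    refine Ssum_congr fun b _ => ?_
    have hcast : ((u + 1 - a : ℕ) : ℤ) = I - a := by
      rw [Nat.cast_sub ha]; push_cast [hI]; ring
    rw [hcast]
    exact congrArg₂ F (by ring) rfl
  rw [step3, ← Ssum_add]
  refine Ssum_congr fun n _ => ?_
  exact inner_core u (fun t => F (I - 2 * n) t)

end SsumLemmas

lemma lie_sum' (x : A) (s : Finset ℕ) (g : ℕ → A) :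
    ⁅x, ∑ a ∈ s, g a⁆ = ∑ a ∈ s, ⁅x, g a⁆ := by
  simp [Ring.lie_def, Finset.mul_sum, Finset.sum_mul, Finset.sum_sub_distrib]

lemma sum_lie' (x : A) (s : Finset ℕ) (g : ℕ → A) :
    ⁅∑ a ∈ s, g a, x⁆ = ∑ a ∈ s, ⁅g a, x⁆ := by
  simp [Ring.lie_def, Finset.mul_sum, Finset.sum_mul, Finset.sum_sub_distrib]

lemma lie_Ssum (x : A) (u : ℕ) (g : ℕ → A) :
    ⁅x, Ssum u g⁆ = Ssum u fun a => ⁅x, g a⁆ := by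
  unfold Ssum
  rw [lie_sum']
  exact Finset.sum_congr rfl fun a _ => by
    simp only [Ring.lie_def, mul_smul_comm, smul_mul_assoc, smul_sub]

lemma Ssum_lie (x : A) (u : ℕ) (g : ℕ → A) :
    ⁅Ssum u g, x⁆ = Ssum u fun a => ⁅g a, x⁆ := by
  unfold Ssum
  rw [sum_lie']
  exact Finset.sum_congr rfl fun a _ => by
    simp only [Ring.lie_def, mul_smul_comm, smul_mul_assoc, smul_sub]

lemma Ssum_csmul (c : ℂ) (u : ℕ) (g : ℕ → A) :
    c • Ssum u g = Ssum u fun a => c • g a := by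
  unfold Ssum
  rw [Finset.smul_sum]
  exact Finset.sum_congr rfl fun a _ => smul_comm c _ _

lemma lie_Lam1 (Y H : ℤ → A) (K M : ℤ)
    (hHY : ∀ k l : ℤ, ⁅H k, Y l⁆ = -(2 • (Y (l + k) + Y (l - k)))) (l : ℤ) :
    (-((1 : ℂ) / 2)) • ⁅Y l, Lam1 H K M⁆
      = (Y (l + (K + M)) + Y (l - (K + M))) - (Y (l + (K - M)) + Y (l - (K - M))) := by
  have e1 : ⁅Y l, Lam1 H K M⁆
      = -(2 • (Y (l + (K + M)) + Y (l - (K + M))))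
        - -(2 • (Y (l + (K - M)) + Y (l - (K - M)))) := by
    have hneg' : ∀ a b : A, ⁅a, -b⁆ = -⁅a, b⁆ := fun a b => by
      simp only [Ring.lie_def, mul_neg, neg_mul]; abel
    have hsub' : ∀ a b c : A, ⁅a, b - c⁆ = ⁅a, b⁆ - ⁅a, c⁆ := fun a b c => by
      simp only [Ring.lie_def, mul_sub, sub_mul]; abel
    have hskew' : ∀ a b : A, -⁅b, a⁆ = ⁅a, b⁆ := fun a b => by
      simp only [Ring.lie_def]; abel
    rw [Lam1, hneg', hsub', ← hskew' (Y l) (H (K + M)), ← hskew' (Y l) (H (K - M)),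
      hHY, hHY]
    abel
  rw [e1]
  have two_cancel : ∀ z : A, (-((1 : ℂ) / 2)) • (2 • z) = -z := by
    intro z
    rw [← Nat.cast_smul_eq_nsmul ℂ 2 z, smul_smul]
    norm_num
  rw [smul_sub, smul_neg, smul_neg, two_cancel, two_cancel]
  abel

lemma Dm_closed (Y H : ℤ → A) (K M : ℤ)
    (hHY : ∀ k l : ℤ, ⁅H k, Y l⁆ = -(2 • (Y (l + k) + Y (l - k)))) :
    ∀ u : ℕ, Dm Y H K M u =
      Ssum u fun a => Ssum u fun b =>
        Y (((u : ℤ) - 2 * a) * K + ((u : ℤ) + 1 - 2 * b) * M)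
  | 0 => by simp [Dm, Ssum]
  | u + 1 => by
    rw [Dm, Dm_closed Y H K M hHY u, Ssum_lie, Ssum_csmul]
    have step : ∀ a, a ≤ u →
        ((-((1 : ℂ) / 2)) • ⁅Ssum u fun b =>
            Y (((u : ℤ) - 2 * a) * K + ((u : ℤ) + 1 - 2 * b) * M), Lam1 H K M⁆)
          = Ssum u fun b =>
              ((Y ((((u : ℤ) + 1) - 2 * a) * K + (((u : ℤ) + 2) - 2 * b) * M)
                - Y ((((u : ℤ) + 1) - 2 * a) * K + (((u : ℤ) + 2) - 2 * (b + 1 : ℕ)) * M))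
               - (Y ((((u : ℤ) + 1) - 2 * (a + 1 : ℕ)) * K + (((u : ℤ) + 2) - 2 * b) * M)
                - Y ((((u : ℤ) + 1) - 2 * (a + 1 : ℕ)) * K
                    + (((u : ℤ) + 2) - 2 * (b + 1 : ℕ)) * M))) := by
      intro a _
      rw [Ssum_lie, Ssum_csmul]
      refine Ssum_congr fun b _ => ?_
      rw [lie_Lam1 Y H K M hHY]
      rw [show ((u : ℤ) - 2 * a) * K + ((u : ℤ) + 1 - 2 * b) * M + (K + M)
          = (((u : ℤ) + 1) - 2 * a) * K + (((u : ℤ) + 2) - 2 * b) * M by ring]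
      rw [show ((u : ℤ) - 2 * a) * K + ((u : ℤ) + 1 - 2 * b) * M - (K + M)
          = (((u : ℤ) + 1) - 2 * (a + 1 : ℕ)) * K
            + (((u : ℤ) + 2) - 2 * (b + 1 : ℕ)) * M by push_cast; ring]
      rw [show ((u : ℤ) - 2 * a) * K + ((u : ℤ) + 1 - 2 * b) * M + (K - M)
          = (((u : ℤ) + 1) - 2 * a) * K + (((u : ℤ) + 2) - 2 * (b + 1 : ℕ)) * M by
            push_cast; ring]
      rw [show ((u : ℤ) - 2 * a) * K + ((u : ℤ) + 1 - 2 * b) * M - (K - M)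
          = (((u : ℤ) + 1) - 2 * (a + 1 : ℕ)) * K + (((u : ℤ) + 2) - 2 * b) * M by
            push_cast; ring]
      abel
    rw [Ssum_congr step]
    have cast_eq : (Ssum (u + 1) fun a => Ssum (u + 1) fun b =>
        Y ((((u + 1 : ℕ) : ℤ) - 2 * a) * K + (((u + 1 : ℕ) : ℤ) + 1 - 2 * b) * M))
      = Ssum (u + 1) fun a => Ssum (u + 1) fun b =>
        Y ((((u : ℤ) + 1) - 2 * a) * K + (((u : ℤ) + 2) - 2 * b) * M) := by
      refine Ssum_congr fun a _ => Ssum_congr fun b _ => ?_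
      exact congrArg Y (by push_cast; ring)
    rw [cast_eq, Ssum_succ u (fun a => Ssum (u + 1) fun b =>
      Y ((((u : ℤ) + 1) - 2 * a) * K + (((u : ℤ) + 2) - 2 * b) * M))]
    refine Ssum_congr fun a _ => ?_
    rw [Ssum_succ, Ssum_succ, ← Ssum_sub]

theorem bracket_x_p (X Y H : ℤ → A)
    (hXneg : ∀ m : ℤ, X (-m) = -X m) (hX0 : X 0 = 0)
    (hYneg : ∀ m : ℤ, Y (-m) = -Y m) (hY0 : Y 0 = 0)
    (hHneg : ∀ m : ℤ, H (-m) = H m)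
    (hXY : ∀ j l : ℤ, ⁅X j, Y l⁆ = H (j + l) - H (j - l))
    (hHX : ∀ k j : ℤ, ⁅H k, X j⁆ = 2 • (X (j + k) - X (k - j)))
    (hHY : ∀ k l : ℤ, ⁅H k, Y l⁆ = -(2 • (Y (l + k) + Y (l - k))))
    (hHH : ∀ k m : ℤ, ⁅H k, H m⁆ = 0)
    (i j k m : ℕ+) :
    ⁅X ((j : ℕ) : ℤ), pG X Y H ((k : ℕ) : ℤ) ((m : ℕ) : ℤ) (i : ℕ)⁆ =
      -(2 • ∑ n ∈ Finset.range ((i : ℕ) + 1), ∑ v ∈ Finset.range ((i : ℕ) + 1),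
        ((-1 : ℤ) ^ (n + v) * ((i : ℕ).choose n : ℤ) * ((i : ℕ).choose v : ℤ)) •
          X (((j : ℕ) : ℤ) + (((i : ℕ) : ℤ) - 2 * n) * ((k : ℕ) : ℤ)
            + (((i : ℕ) : ℤ) - 2 * v) * ((m : ℕ) : ℤ))) := by
  obtain ⟨u, hu⟩ : ∃ u : ℕ, (i : ℕ) = u + 1 := ⟨(i : ℕ) - 1, (Nat.succ_pred_eq_of_pos i.2).symm⟩
  set J : ℤ := ((j : ℕ) : ℤ) with hJ
  set K : ℤ := ((k : ℕ) : ℤ) with hK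
  set Mz : ℤ := ((m : ℕ) : ℤ) with hMz
  have h2 : ∀ z : A, (-2 : ℤ) • z = -(2 • z) := by
    intro z
    rw [neg_smul, two_zsmul, two_nsmul]
  have hXH : ∀ r : ℤ, ⁅X J, H r⁆ = -(2 • (X (J + r) + X (J - r))) := by
    intro r
    rw [show ⁅X J, H r⁆ = -⁅H r, X J⁆ by simp only [Ring.lie_def]; abel, hHX, show r - J = -(J - r) by ring, hXneg, sub_neg_eq_add]
  simp only [pG, hu, Nat.add_sub_cancel]
  rw [Dm_closed Y H K Mz hHY u]
  have hsub' : ∀ a b c : A, ⁅a, b - c⁆ = ⁅a, b⁆ - ⁅a, c⁆ := fun a b c => by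
    simp only [Ring.lie_def, mul_sub, sub_mul]; abel
  simp only [lie_Ssum, hXY, hsub', hXH]
  have per : ∀ a b : ℕ,
      -(2 • (X (J + (K + (((u : ℤ) - 2 * a) * K + ((u : ℤ) + 1 - 2 * b) * Mz))) + X (J - (K + (((u : ℤ) - 2 * a) * K + ((u : ℤ) + 1 - 2 * b) * Mz))))) - -(2 • (X (J + (K - (((u : ℤ) - 2 * a) * K + ((u : ℤ) + 1 - 2 * b) * Mz))) + X (J - (K - (((u : ℤ) - 2 * a) * K + ((u : ℤ) + 1 - 2 * b) * Mz)))))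
      = (-2 : ℤ) • (X (J + ((((u : ℤ) + 1) - 2 * a) * K) + ((((u : ℤ) + 1) - 2 * b) * Mz)) + X (J + ((2 * a - ((u : ℤ) + 1)) * K) + ((2 * b - ((u : ℤ) + 1)) * Mz)) - X (J + ((2 + 2 * a - ((u : ℤ) + 1)) * K) + ((2 * b - ((u : ℤ) + 1)) * Mz)) - X (J + ((((u : ℤ) + 1) - 2 - 2 * a) * K) + ((((u : ℤ) + 1) - 2 * b) * Mz))) := by
    intro a b
    rw [show J + (K + (((u : ℤ) - 2 * a) * K + ((u : ℤ) + 1 - 2 * b) * Mz))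
        = J + ((((u : ℤ) + 1) - 2 * a) * K) + ((((u : ℤ) + 1) - 2 * b) * Mz) by ring]
    rw [show J - (K + (((u : ℤ) - 2 * a) * K + ((u : ℤ) + 1 - 2 * b) * Mz))
        = J + ((2 * a - ((u : ℤ) + 1)) * K) + ((2 * b - ((u : ℤ) + 1)) * Mz) by ring]
    rw [show J + (K - (((u : ℤ) - 2 * a) * K + ((u : ℤ) + 1 - 2 * b) * Mz))
        = J + ((2 + 2 * a - ((u : ℤ) + 1)) * K) + ((2 * b - ((u : ℤ) + 1)) * Mz) by ring]
    rw [show J - (K - (((u : ℤ) - 2 * a) * K + ((u : ℤ) + 1 - 2 * b) * Mz))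
        = J + ((((u : ℤ) + 1) - 2 - 2 * a) * K) + ((((u : ℤ) + 1) - 2 * b) * Mz) by ring]
    rw [h2]
    abel
  rw [Ssum_congr fun a (ha : a ≤ u) => Ssum_congr fun b (hb : b ≤ u) => per a b]
  rw [Ssum_congr fun a (ha : a ≤ u) => Ssum_zsmul u (-2) _, Ssum_zsmul]
  have hcore := core (M := A) u
    (fun α β => X (J + (α * K) + (β * Mz)))
  rw [hcore, ← h2]
  congr 1
  unfold Ssum
  refine Finset.sum_congr rfl fun n _ => ?_
  rw [Finset.smul_sum]
  refine Finset.sum_congr rfl fun v _ => ?_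
  rw [smul_smul]
  rw [show ((-1 : ℤ) ^ n * (((u + 1).choose n : ℕ) : ℤ))
        * ((-1 : ℤ) ^ v * (((u + 1).choose v : ℕ) : ℤ))
      = (-1 : ℤ) ^ (n + v) * (((u + 1).choose n : ℕ) : ℤ)
        * (((u + 1).choose v : ℕ) : ℤ) by rw [pow_add]; ring]
  congr 2 <;> (push_cast; try ring)
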